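/- arXiv:1905.12477 — 4 statements merged into one kernel-verified Lean document; each statement's English description precedes it below -/
import Mathlib

section
/- If station s1 dominates station s2, then removing s2 from S and from every connection yields an instance whose minimum station-cover size equals that of the original instance. -/
/-- If `s1` dominates `s2`, removing `s2` from the station set and from every
connection yields an instance with the same minimum station-cover size. -/
theorem stmt1 {α : Type*} [Fintype α] [DecidableEq α]
    (C : Finset (Finset α)) (hne : ∀ c ∈ C, c.Nonempty)
    (s1 s2 : α) (hs : s1 ≠ s2)
    (hdom : ∀ c ∈ C, s2 ∈ c → s1 ∈ c) :
    sInf {k | ∃ S' : Finset α, (∀ c ∈ C, (S' ∩ c).Nonempty) ∧ S'.card = k} =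
      sInf {k | ∃ S' : Finset α, s2 ∉ S' ∧
        (∀ c ∈ C.image (fun c => c.erase s2), (S' ∩ c).Nonempty) ∧ S'.card = k} := by
  set L := {k | ∃ S' : Finset α, (∀ c ∈ C, (S' ∩ c).Nonempty) ∧ S'.card = k} with hL
  set R := {k | ∃ S' : Finset α, s2 ∉ S' ∧
      (∀ c ∈ C.image (fun c => c.erase s2), (S' ∩ c).Nonempty) ∧ S'.card = k} with hR
  -- erased connections are nonempty
  have herase : ∀ c ∈ C, (c.erase s2).Nonempty := by
    intro c hc
    by_cases h2 : s2 ∈ c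
    · exact ⟨s1, Finset.mem_erase.2 ⟨hs, hdom c hc h2⟩⟩
    · obtain ⟨x, hx⟩ := hne c hc
      exact ⟨x, Finset.mem_erase.2 ⟨fun h => h2 (h ▸ hx), hx⟩⟩
  have hLne : L.Nonempty := by
    refine ⟨(Finset.univ : Finset α).card, Finset.univ, fun c hc => ?_, rfl⟩
    obtain ⟨x, hx⟩ := hne c hc
    exact ⟨x, Finset.mem_inter.2 ⟨Finset.mem_univ x, hx⟩⟩
  have hRne : R.Nonempty := by
    refine ⟨(Finset.univ.erase s2).card, Finset.univ.erase s2,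
      Finset.notMem_erase _ _, fun c hc => ?_, rfl⟩
    obtain ⟨c', hc', rfl⟩ := Finset.mem_image.1 hc
    obtain ⟨x, hx⟩ := herase c' hc'
    exact ⟨x, Finset.mem_inter.2
      ⟨Finset.mem_erase.2 ⟨(Finset.mem_erase.1 hx).1, Finset.mem_univ x⟩, hx⟩⟩
  apply le_antisymm
  · -- sInf L ≤ sInf R
    obtain ⟨S', hS2, hcov, hcard⟩ := Nat.sInf_mem hRne
    refine Nat.sInf_le ⟨S', fun c hc => ?_, hcard⟩
    have := hcov (c.erase s2) (Finset.mem_image_of_mem _ hc)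
    obtain ⟨x, hx⟩ := this
    rw [Finset.mem_inter] at hx
    exact ⟨x, Finset.mem_inter.2 ⟨hx.1, Finset.mem_of_mem_erase hx.2⟩⟩
  · -- sInf R ≤ sInf L
    obtain ⟨S', hcov, hcard⟩ := Nat.sInf_mem hLne
    set T : Finset α := if s2 ∈ S' then insert s1 (S'.erase s2) else S' with hT
    have hs2T : s2 ∉ T := by
      rw [hT]; split
      · intro h
        rcases Finset.mem_insert.1 h with h | h
        · exact hs h.symm
        · exact Finset.notMem_erase _ _ h
      · assumption
    have hTcov : ∀ c ∈ C.image (fun c => c.erase s2), (T ∩ c).Nonempty := by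
      intro c hc
      obtain ⟨c', hc', rfl⟩ := Finset.mem_image.1 hc
      obtain ⟨x, hx⟩ := hcov c' hc'
      rw [Finset.mem_inter] at hx
      by_cases hx2 : x = s2
      · -- s2 ∈ c', so s1 ∈ c', and s1 ∈ T
        have hs1c : s1 ∈ c' := hdom c' hc' (hx2 ▸ hx.2)
        have hs1T : s1 ∈ T := by
          rw [hT]; rw [if_pos (hx2 ▸ hx.1)]
          exact Finset.mem_insert_self _ _
        exact ⟨s1, Finset.mem_inter.2 ⟨hs1T, Finset.mem_erase.2 ⟨hs, hs1c⟩⟩⟩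
      · have hxT : x ∈ T := by
          rw [hT]; split
          · exact Finset.mem_insert_of_mem (Finset.mem_erase.2 ⟨hx2, hx.1⟩)
          · exact hx.1
        exact ⟨x, Finset.mem_inter.2 ⟨hxT, Finset.mem_erase.2 ⟨hx2, hx.2⟩⟩⟩
    have hTcard : T.card ≤ S'.card := by
      rw [hT]; split
      · calc (insert s1 (S'.erase s2)).card ≤ (S'.erase s2).card + 1 :=
              Finset.card_insert_le _ _
          _ ≤ S'.card := by
              rename_i h
              rw [Finset.card_erase_of_mem h]
              have := Finset.card_pos.2 ⟨s2, h⟩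
              omega
      · exact le_rfl
    calc sInf R ≤ T.card := Nat.sInf_le ⟨T, hs2T, hTcov, rfl⟩
      _ ≤ S'.card := hTcard
      _ = sInf L := hcard
end

section
/- For every connected graph G with at least one edge, there exists a station cover instance N1 with underlying graph G_{N1} = G such that after exhaustively applying the reduction rules, the core has exactly one station; namely, choose connections so that a single designated station s lies on every connection. -/
variable {α : Type*} [DecidableEq α]

/-- The underlying graph of a network of connections (sequences of stations). -/
def graphOf (C : Finset (List α)) : SimpleGraph α :=
  SimpleGraph.fromRel (fun a b => ∃ l ∈ C, [a, b] <:+: l)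

/-- One application of Weihe's reduction rules. -/
def Step (C C' : Finset (List α)) : Prop :=
  (∃ s1 s2 : α, s1 ≠ s2 ∧ (∃ l ∈ C, s2 ∈ l) ∧ (∀ l ∈ C, s2 ∈ l → s1 ∈ l) ∧
      C' = C.image (fun l => l.filter (fun x => x ≠ s2))) ∨
  (∃ l1 l2 : List α, l1 ∈ C ∧ l2 ∈ C ∧ l1 ≠ l2 ∧ (∀ x ∈ l1, x ∈ l2) ∧
      C' = C.erase l2)

section Aux

open SimpleGraph Walk in
/-- For an edge `a-b` of a connected graph there is a simple path through `s`
containing the edge (in one of the two orders) as an infix. -/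
lemma connList_exists {V : Type*} (G : SimpleGraph V) (hconn : G.Connected) (s : V)
    {a b : V} (hab : G.Adj a b) :
    ∃ L : List V, L.Nodup ∧ L.Chain' G.Adj ∧ s ∈ L ∧
      ([a, b] <:+: L ∨ [b, a] <:+: L) := by
  classical
  obtain ⟨p₀⟩ := hconn.preconnected s a
  set p : G.Walk s a := (p₀.toPath : G.Walk s a) with hp
  have hpath : p.IsPath := p₀.toPath.2
  by_cases hb : b ∈ p.support
  · refine ⟨(p.takeUntil b hb).support ++ [a], ?_, ?_, ?_, ?_⟩
    · have hnd : (p.takeUntil b hb).support.Nodup := (hpath.takeUntil hb).support_nodup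
      have hna : a ∉ (p.takeUntil b hb).support := by
        intro ha
        have hspec := p.take_spec hb
        have hnd' : p.support.Nodup := hpath.support_nodup
        rw [← hspec, Walk.support_append, List.nodup_append] at hnd'
        have ha2 : a ∈ (p.dropUntil b hb).support.tail := by
          have := (p.dropUntil b hb).support_eq_cons
          have hmem : a ∈ (p.dropUntil b hb).support := Walk.end_mem_support _
          rw [this] at hmem
          rcases List.mem_cons.1 hmem with h | h
          · exact absurd h.symm hab.ne'
          · exact h
        exact hnd'.2.2 a ha a ha2 rfl
      simp [List.nodup_append, hnd, hna]
      exact fun x hx h => hna (h ▸ hx)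
    · refine List.isChain_append.2 ?_
      refine ⟨(p.takeUntil b hb).isChain_adj_support, List.isChain_singleton _, ?_⟩
      intro x hx y hy
      simp only [List.head?_cons, Option.mem_def, Option.some.injEq] at hy
      have : (p.takeUntil b hb).support.getLast (by simp) = b := Walk.getLast_support _
      rw [List.getLast?_eq_getLast (by simp), Option.mem_def, Option.some.injEq] at hx
      subst hy; rw [← hx, this]; exact hab.symm
    · exact List.mem_append_left _ (Walk.start_mem_support _)
    · right
      refine ⟨(p.takeUntil b hb).support.dropLast, [], ?_⟩
      have : (p.takeUntil b hb).support.dropLast ++ [b] = (p.takeUntil b hb).support := by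
        conv_rhs => rw [← List.dropLast_append_getLast (l := (p.takeUntil b hb).support) (by simp)]
        rw [Walk.getLast_support]
      rw [List.append_nil, show ([b,a]:List V) = [b] ++ [a] from rfl, ← List.append_assoc, this]
  · refine ⟨p.support ++ [b], ?_, ?_, ?_, ?_⟩
    · simp [List.nodup_append, hpath.support_nodup, hb]
      exact fun x hx h => hb (h ▸ hx)
    · refine List.isChain_append.2 ?_
      refine ⟨p.isChain_adj_support, List.isChain_singleton _, ?_⟩
      intro x hx y hy
      simp only [List.head?_cons, Option.mem_def, Option.some.injEq] at hy
      rw [List.getLast?_eq_getLast (by simp), Option.mem_def, Option.some.injEq] at hx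
      subst hy; rw [← hx, Walk.getLast_support]; exact hab
    · exact List.mem_append_left _ (Walk.start_mem_support _)
    · left
      refine ⟨p.support.dropLast, [], ?_⟩
      have : p.support.dropLast ++ [a] = p.support := by
        conv_rhs => rw [← List.dropLast_append_getLast (l := p.support) (by simp)]
        rw [Walk.getLast_support]
      rw [List.append_nil, show ([a,b]:List V) = [a] ++ [b] from rfl, ← List.append_assoc, this]

/-- Exhaustive reduction: if `s` lies on every (nodup) connection, the core
has exactly one station. -/
lemma reduce (s : α) : ∀ n (C : Finset (List α)), (C.biUnion List.toFinset).card ≤ n →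
    C.Nonempty → (∀ l ∈ C, l.Nodup) → (∀ l ∈ C, s ∈ l) →
    ∃ C', Relation.ReflTransGen Step C C' ∧ (¬ ∃ C'' : Finset (List α), Step C' C'') ∧
      (C'.biUnion List.toFinset).card = 1 := by
  intro n
  induction n with
  | zero =>
    intro C hcard ⟨l, hl⟩ _ hs
    exfalso
    have : s ∈ C.biUnion List.toFinset := Finset.mem_biUnion.2 ⟨l, hl, List.mem_toFinset.2 (hs l hl)⟩
    have := Finset.card_pos.2 ⟨s, this⟩
    omega
  | succ n ih =>
    intro C hcard hne hnd hs
    by_cases ht : ∃ t ∈ C.biUnion List.toFinset, t ≠ s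
    · obtain ⟨t, htm, hts⟩ := ht
      obtain ⟨l, hl, htl⟩ := Finset.mem_biUnion.1 htm
      set C₂ := C.image (fun l => l.filter (fun x => x ≠ t)) with hC₂
      have hstep : Step C C₂ := by
        left
        exact ⟨s, t, hts.symm, ⟨l, hl, List.mem_toFinset.1 htl⟩, fun l hl _ => hs l hl, rfl⟩
      have hsub : C₂.biUnion List.toFinset ⊆ (C.biUnion List.toFinset).erase t := by
        intro x hx
        obtain ⟨l', hl', hxl'⟩ := Finset.mem_biUnion.1 hx
        obtain ⟨l₀, hl₀, rfl⟩ := Finset.mem_image.1 hl'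
        have hx' := List.mem_toFinset.1 hxl'
        rw [List.mem_filter] at hx'
        refine Finset.mem_erase.2 ⟨by simpa using hx'.2,
          Finset.mem_biUnion.2 ⟨l₀, hl₀, List.mem_toFinset.2 hx'.1⟩⟩
      have hcard2 : (C₂.biUnion List.toFinset).card ≤ n := by
        have h1 : ((C.biUnion List.toFinset).erase t).card < (C.biUnion List.toFinset).card :=
          Finset.card_erase_lt_of_mem htm
        have := Finset.card_le_card hsub
        omega
      have hne2 : C₂.Nonempty := hne.image _
      have hnd2 : ∀ l ∈ C₂, l.Nodup := by
        intro l' hl'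
        obtain ⟨l₀, hl₀, rfl⟩ := Finset.mem_image.1 hl'
        exact (hnd l₀ hl₀).filter _
      have hs2 : ∀ l ∈ C₂, s ∈ l := by
        intro l' hl'
        obtain ⟨l₀, hl₀, rfl⟩ := Finset.mem_image.1 hl'
        exact List.mem_filter.2 ⟨hs l₀ hl₀, by simpa using hts.symm⟩
      obtain ⟨C', h1, h2, h3⟩ := ih C₂ hcard2 hne2 hnd2 hs2
      exact ⟨C', Relation.ReflTransGen.head hstep h1, h2, h3⟩
    · push_neg at ht
      have hall : ∀ l ∈ C, l = [s] := by
        intro l hl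
        have hsl := hs l hl
        have : ∀ x ∈ l, x = s := fun x hx =>
          ht x (Finset.mem_biUnion.2 ⟨l, hl, List.mem_toFinset.2 hx⟩)
        have hnd' := hnd l hl
        cases l with
        | nil => simp at hsl
        | cons a l' =>
          have ha : a = s := this a List.mem_cons_self
          cases l' with
          | nil => simp [ha]
          | cons b l'' =>
            have hb : b = s := this b (by simp)
            exfalso
            rw [List.nodup_cons] at hnd'
            exact hnd'.1 (by simp [ha, hb])
      have hCeq : C = {[s]} := by
        obtain ⟨l, hl⟩ := hne
        apply Finset.eq_singleton_iff_nonempty_unique_mem.2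
        exact ⟨⟨l, hl⟩, hall⟩
      refine ⟨C, Relation.ReflTransGen.refl, ?_, ?_⟩
      · rintro ⟨C'', hstep⟩
        rcases hstep with ⟨s1, s2, h12, ⟨l, hl, hs2l⟩, hdom, _⟩ | ⟨l1, l2, hl1, hl2, h12, _, _⟩
        · have hl' := hall l hl
          subst hl'
          have : s2 = s := by simpa using hs2l
          subst this
          have := hdom [s2] hl (by simp)
          simp at this
          exact h12 this
        · rw [hall l1 hl1, hall l2 hl2] at h12
          exact h12 rfl
      · rw [hCeq]
        simp

end Aux

/-- For every connected graph `G` with an edge there is a station cover instance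
(whose connections are simple paths in `G` all through one designated station `s`)
with underlying graph `G` whose core has exactly one station. -/
theorem stmt7 {α : Type*} [Fintype α] [DecidableEq α]
    (G : SimpleGraph α) (hconn : G.Connected) (hedge : ∃ a b : α, G.Adj a b) :
    ∃ C : Finset (List α),
      (∀ l ∈ C, l.Nodup ∧ l.Chain' G.Adj) ∧
      graphOf C = G ∧
      (∃ s : α, ∀ l ∈ C, s ∈ l) ∧
      ∃ C' : Finset (List α), Relation.ReflTransGen Step C C' ∧
        (¬ ∃ C'' : Finset (List α), Step C' C'') ∧
        (C'.biUnion List.toFinset).card = 1 := by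
  classical
  obtain ⟨a₀, b₀, hab₀⟩ := hedge
  set s : α := a₀ with hs0
  let f : α × α → List α := fun p =>
    if h : G.Adj p.1 p.2 then Classical.choose (connList_exists G hconn s h)
    else Classical.choose (connList_exists G hconn s hab₀)
  have hf : ∀ p : α × α, (f p).Nodup ∧ (f p).Chain' G.Adj ∧ s ∈ f p := by
    intro p
    by_cases h : G.Adj p.1 p.2
    · have hsp := Classical.choose_spec (connList_exists G hconn s h)
      simp only [f, dif_pos h]
      exact ⟨hsp.1, hsp.2.1, hsp.2.2.1⟩
    · have hsp := Classical.choose_spec (connList_exists G hconn s hab₀)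
      simp only [f, dif_neg h]
      exact ⟨hsp.1, hsp.2.1, hsp.2.2.1⟩
  set C : Finset (List α) := Finset.univ.image f with hC
  have hmem : ∀ l ∈ C, ∃ p, f p = l := by
    intro l hl
    obtain ⟨p, _, rfl⟩ := Finset.mem_image.1 hl
    exact ⟨p, rfl⟩
  have hprops : ∀ l ∈ C, l.Nodup ∧ l.Chain' G.Adj := by
    intro l hl
    obtain ⟨p, rfl⟩ := hmem l hl
    exact ⟨(hf p).1, (hf p).2.1⟩
  have hsin : ∀ l ∈ C, s ∈ l := by
    intro l hl
    obtain ⟨p, rfl⟩ := hmem l hl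
    exact (hf p).2.2
  have hgraph : graphOf C = G := by
    ext x y
    rw [graphOf, SimpleGraph.fromRel_adj]
    constructor
    · rintro ⟨hne, h | h⟩ <;>
      · obtain ⟨l, hl, hinf⟩ := h
        have hch : l.Chain' G.Adj := (hprops l hl).2
        have := hch.infix hinf
        rw [List.isChain_pair] at this
        first
          | exact this
          | exact this.symm
    · intro hxy
      refine ⟨hxy.ne, ?_⟩
      have hmem' : f (x, y) ∈ C := Finset.mem_image.2 ⟨(x, y), Finset.mem_univ _, rfl⟩
      have hfx : f (x, y) = Classical.choose (connList_exists G hconn s hxy) := by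
        simp only [f, dif_pos hxy]
      have hsp := Classical.choose_spec (connList_exists G hconn s hxy)
      rcases hsp.2.2.2 with h | h
      · exact Or.inl ⟨f (x, y), hmem', hfx ▸ h⟩
      · exact Or.inr ⟨f (x, y), hmem', hfx ▸ h⟩
  have hne : C.Nonempty := ⟨f (a₀, b₀), Finset.mem_image.2 ⟨(a₀, b₀), Finset.mem_univ _, rfl⟩⟩
  obtain ⟨C', h1, h2, h3⟩ := reduce s (C.biUnion List.toFinset).card C le_rfl hne
    (fun l hl => (hprops l hl).1) hsin
  exact ⟨C, hprops, hgraph, ⟨s, hsin⟩, C', h1, h2, h3⟩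
end

section
/- In the 3-SAT reduction graph (literal vertices x, x̄ for each of n variables, each pair adjacent, plus vertices z0 and z1 adjacent to all literal vertices), the formula φ is satisfiable if and only if the resulting station cover instance has a cover of size n. -/
/-- Vertex set of the 3-SAT reduction graph: literal vertices `(i, b)` plus the two
special vertices `z0 = Sum.inr false` and `z1 = Sum.inr true`. -/
abbrev V (n : ℕ) := (Fin n × Bool) ⊕ Bool

/-- A 3-clause: a triple of literals, each a variable with a polarity. -/
abbrev Clause (n : ℕ) := (Fin n × Bool) × (Fin n × Bool) × (Fin n × Bool)

/-- The connection `{x, x̄}` for variable `i`. -/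
def varConn (n : ℕ) (i : Fin n) : Finset (V n) :=
  {Sum.inl (i, true), Sum.inl (i, false)}

/-- The connection `(l_a, z0, l_b, z1, l_c)` (as a set) for a clause. -/
def clauseConn (n : ℕ) (cl : Clause n) : Finset (V n) :=
  {Sum.inl cl.1, Sum.inr false, Sum.inl cl.2.1, Sum.inr true, Sum.inl cl.2.2}

/-- The connections of the station cover instance built from the formula `φ`. -/
def conns (n : ℕ) (φ : List (Clause n)) : Finset (Finset (V n)) :=
  (Finset.univ.image (varConn n)) ∪ (φ.toFinset.image (clauseConn n))

/-- Satisfiability of a 3-CNF formula. -/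
def Sat (n : ℕ) (φ : List (Clause n)) : Prop :=
  ∃ a : Fin n → Bool, ∀ cl ∈ φ,
    a cl.1.1 = cl.1.2 ∨ a cl.2.1.1 = cl.2.1.2 ∨ a cl.2.2.1 = cl.2.2.2

/-- The underlying graph of the reduction: the two literal vertices of each
variable are adjacent, and `z0`, `z1` are adjacent to all literal vertices. -/
def redGraph (n : ℕ) : SimpleGraph (V n) :=
  SimpleGraph.fromRel (fun u v =>
    (∃ (i : Fin n) (b c : Bool), u = Sum.inl (i, b) ∧ v = Sum.inl (i, c)) ∨
    (∃ (p : Fin n × Bool) (z : Bool), u = Sum.inl p ∧ v = Sum.inr z))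

/-- The formula `φ` is satisfiable iff the station cover instance of the 3-SAT
reduction has a cover of size `n`. -/
theorem stmt10 (n : ℕ) (φ : List (Clause n)) :
    Sat n φ ↔ ∃ S' : Finset (V n), S'.card = n ∧
      ∀ c ∈ conns n φ, (S' ∩ c).Nonempty := by
  classical
  constructor
  · rintro ⟨a, ha⟩
    refine ⟨Finset.univ.image (fun i => Sum.inl (i, a i)), ?_, ?_⟩
    · rw [Finset.card_image_of_injective _ (fun x y h => by simp at h; exact h.1),
        Finset.card_univ, Fintype.card_fin]
    · intro c hc
      simp only [conns, Finset.mem_union, Finset.mem_image, List.mem_toFinset,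
        Finset.mem_univ, true_and] at hc
      rcases hc with ⟨i, rfl⟩ | ⟨cl, hcl, rfl⟩
      · refine ⟨Sum.inl (i, a i), Finset.mem_inter.mpr ⟨?_, ?_⟩⟩
        · simp
        · cases a i <;> simp [varConn]
      · rcases ha cl hcl with h | h | h
        · refine ⟨Sum.inl cl.1, Finset.mem_inter.mpr ⟨?_, by simp [clauseConn]⟩⟩
          simp only [Finset.mem_image, Finset.mem_univ, true_and]
          exact ⟨cl.1.1, by rw [h]⟩
        · refine ⟨Sum.inl cl.2.1, Finset.mem_inter.mpr ⟨?_, by simp [clauseConn]⟩⟩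
          simp only [Finset.mem_image, Finset.mem_univ, true_and]
          exact ⟨cl.2.1.1, by rw [h]⟩
        · refine ⟨Sum.inl cl.2.2, Finset.mem_inter.mpr ⟨?_, by simp [clauseConn]⟩⟩
          simp only [Finset.mem_image, Finset.mem_univ, true_and]
          exact ⟨cl.2.2.1, by rw [h]⟩
  · rintro ⟨S, hcard, hcov⟩
    have hvar : ∀ i : Fin n, (S ∩ varConn n i).Nonempty := by
      intro i
      apply hcov
      exact Finset.mem_union.mpr (Or.inl (Finset.mem_image.mpr ⟨i, Finset.mem_univ i, rfl⟩))
    set f : Fin n → V n := fun i => (hvar i).choose with hf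
    have hfS : ∀ i, f i ∈ S := fun i => (Finset.mem_inter.mp (hvar i).choose_spec).1
    have hfv : ∀ i, f i ∈ varConn n i := fun i => (Finset.mem_inter.mp (hvar i).choose_spec).2
    have hfv' : ∀ i, ∃ b : Bool, f i = Sum.inl (i, b) := by
      intro i
      have := hfv i
      simp only [varConn, Finset.mem_insert, Finset.mem_singleton] at this
      rcases this with h | h
      · exact ⟨true, h⟩
      · exact ⟨false, h⟩
    have hinj : Function.Injective f := by
      intro i j h
      obtain ⟨b, hb⟩ := hfv' i
      obtain ⟨c, hc⟩ := hfv' j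
      rw [hb, hc] at h
      simpa using congrArg (fun v => match v with | Sum.inl p => p.1 | Sum.inr _ => i) h
    have himg : Finset.univ.image f = S := by
      apply Finset.eq_of_subset_of_card_le
      · intro v hv
        obtain ⟨i, _, rfl⟩ := Finset.mem_image.mp hv
        exact hfS i
      · rw [hcard, Finset.card_image_of_injective _ hinj, Finset.card_univ, Fintype.card_fin]
    have hmem : ∀ (j : Fin n) (c : Bool), Sum.inl (j, c) ∈ S → f j = Sum.inl (j, c) := by
      intro j c h
      rw [← himg] at h
      obtain ⟨j', _, hj'⟩ := Finset.mem_image.mp h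
      obtain ⟨b, hb⟩ := hfv' j'
      rw [hb] at hj'
      have : j' = j ∧ b = c := by simpa using hj'
      rw [← this.1, hb, this.1, this.2]
    set a : Fin n → Bool := fun j => if Sum.inl (j, true) ∈ S then true else false with haa
    have haS : ∀ j, Sum.inl (j, a j) ∈ S := by
      intro j
      by_cases h : Sum.inl (j, true) ∈ S
      · simpa [haa, h] using h
      · have := hvar j
        obtain ⟨v, hv⟩ := this
        rw [Finset.mem_inter] at hv
        have hv2 := hv.2
        simp only [varConn, Finset.mem_insert, Finset.mem_singleton] at hv2
        rcases hv2 with rfl | rfl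
        · exact absurd hv.1 h
        · simpa [haa, h] using hv.1
    have hSa : ∀ (j : Fin n) (c : Bool), Sum.inl (j, c) ∈ S → a j = c := by
      intro j c h
      cases c
      · have hnot : Sum.inl (j, true) ∉ S := by
          intro ht
          have h1 := hmem j true ht
          have h2 := hmem j false h
          rw [h1] at h2
          simpa using h2
        simp [haa, hnot]
      · simp [haa, h]
    have hnoz : ∀ z : Bool, (Sum.inr z : V n) ∉ S := by
      intro z h
      rw [← himg] at h
      obtain ⟨j, _, hj⟩ := Finset.mem_image.mp h
      obtain ⟨b, hb⟩ := hfv' j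
      rw [hb] at hj
      simpa using hj
    refine ⟨a, ?_⟩
    intro cl hcl
    have hc : (S ∩ clauseConn n cl).Nonempty := by
      apply hcov
      exact Finset.mem_union.mpr (Or.inr (Finset.mem_image.mpr
        ⟨cl, List.mem_toFinset.mpr hcl, rfl⟩))
    obtain ⟨v, hv⟩ := hc
    rw [Finset.mem_inter] at hv
    have hv2 := hv.2
    simp only [clauseConn, Finset.mem_insert, Finset.mem_singleton] at hv2
    rcases hv2 with rfl | rfl | rfl | rfl | rfl
    · exact Or.inl (hSa cl.1.1 cl.1.2 hv.1)
    · exact absurd hv.1 (hnoz false)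
    · exact Or.inr (Or.inl (hSa cl.2.1.1 cl.2.1.2 hv.1))
    · exact absurd hv.1 (hnoz true)
    · exact Or.inr (Or.inr (hSa cl.2.2.1 cl.2.2.2 hv.1))
end

section
/- The core of a station cover instance obtained by exhaustively applying the dominance reduction rules is unique up to the choice of representatives among mutually dominating stations and mutually equal connections; in particular, the number of stations in the core is independent of the order in which the reduction rules are applied. -/
variable {α : Type*} [DecidableEq α]

/-- One application of a dominance reduction rule to an instance `(S, C)`:
either delete a dominated station from `S` and all connections, or delete a
dominated (superset) connection. -/
def Step14 (N N' : Finset α × Finset (Finset α)) : Prop :=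
  (∃ s1 s2 : α, s1 ∈ N.1 ∧ s2 ∈ N.1 ∧ s1 ≠ s2 ∧
      (∀ c ∈ N.2, s2 ∈ c → s1 ∈ c) ∧
      N'.1 = N.1.erase s2 ∧ N'.2 = N.2.image (fun c => c.erase s2)) ∨
  (∃ c1 c2 : Finset α, c1 ∈ N.2 ∧ c2 ∈ N.2 ∧ c1 ≠ c2 ∧ c1 ⊆ c2 ∧
      N'.1 = N.1 ∧ N'.2 = N.2.erase c2)

namespace Stmt14Aux

/-- Action of a permutation of `α` on an instance. -/
def act (σ : Equiv.Perm α) (N : Finset α × Finset (Finset α)) :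
    Finset α × Finset (Finset α) :=
  (N.1.image σ, N.2.image (fun c => c.image σ))

lemma act_one (N : Finset α × Finset (Finset α)) : act (1 : Equiv.Perm α) N = N := by
  simp [act]

lemma act_mul (σ τ : Equiv.Perm α) (N : Finset α × Finset (Finset α)) :
    act σ (act τ N) = act (σ * τ) N := by
  simp [act, Finset.image_image, Function.comp_def]

lemma swap_erase {s t : α} {c : Finset α} (h : s ∈ c ↔ t ∈ c) :
    (c.erase s).image (Equiv.swap s t) = c.erase t := by
  ext a
  simp only [Finset.mem_image, Finset.mem_erase]
  constructor
  · rintro ⟨b, ⟨hbs, hbc⟩, rfl⟩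
    rcases eq_or_ne b t with rfl | hbt
    · rw [Equiv.swap_apply_right]
      exact ⟨Ne.symm hbs, h.mpr hbc⟩
    · rw [Equiv.swap_apply_of_ne_of_ne hbs hbt]
      exact ⟨hbt, hbc⟩
  · rintro ⟨hat, hac⟩
    rcases eq_or_ne a s with rfl | has
    · refine ⟨t, ⟨Ne.symm hat, h.mp hac⟩, Equiv.swap_apply_right _ _⟩
    · exact ⟨a, ⟨has, hac⟩, Equiv.swap_apply_of_ne_of_ne has hat⟩

lemma step_act (σ : Equiv.Perm α) {N M : Finset α × Finset (Finset α)}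
    (h : Step14 N M) : Step14 (act σ N) (act σ M) := by
  rcases h with ⟨s1, s2, hs1, hs2, hs12, hdom, h1, h2⟩ |
    ⟨c1, c2, hc1, hc2, hc12, hsub, h1, h2⟩
  · left
    refine ⟨σ s1, σ s2, Finset.mem_image_of_mem _ hs1, Finset.mem_image_of_mem _ hs2,
      fun h => hs12 (σ.injective h), ?_, ?_, ?_⟩
    · intro c hc hmem
      rcases Finset.mem_image.1 hc with ⟨d, hd, rfl⟩
      have hs2d : s2 ∈ d := by
        rcases Finset.mem_image.1 hmem with ⟨x, hx, hxe⟩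
        rwa [σ.injective hxe] at hx
      exact Finset.mem_image_of_mem _ (hdom d hd hs2d)
    · show M.1.image σ = (N.1.image σ).erase (σ s2)
      rw [h1, Finset.image_erase σ.injective]
    · show M.2.image (fun c => c.image σ) =
        (N.2.image (fun c => c.image σ)).image (fun c => c.erase (σ s2))
      rw [h2, Finset.image_image, Finset.image_image]
      apply Finset.image_congr
      intro c _
      show (c.erase s2).image σ = (c.image σ).erase (σ s2)
      rw [Finset.image_erase σ.injective]
  · right
    refine ⟨c1.image σ, c2.image σ, Finset.mem_image_of_mem _ hc1,
      Finset.mem_image_of_mem _ hc2,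
      fun h => hc12 (Finset.image_injective σ.injective h),
      Finset.image_subset_image hsub, ?_, ?_⟩
    · show M.1.image σ = N.1.image σ
      rw [h1]
    · show M.2.image (fun c => c.image σ) = (N.2.image (fun c => c.image σ)).erase (c2.image σ)
      rw [h2, Finset.image_erase (Finset.image_injective σ.injective)]

lemma rtg_act (σ : Equiv.Perm α) {N M : Finset α × Finset (Finset α)}
    (h : Relation.ReflTransGen Step14 N M) :
    Relation.ReflTransGen Step14 (act σ N) (act σ M) :=
  Relation.ReflTransGen.lift (act σ) (fun _ _ hab => step_act σ hab) _ _ h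

lemma act_inv_act (σ : Equiv.Perm α) (N : Finset α × Finset (Finset α)) :
    act σ⁻¹ (act σ N) = N := by
  rw [act_mul, inv_mul_cancel, act_one]

lemma act_act_inv (σ : Equiv.Perm α) (N : Finset α × Finset (Finset α)) :
    act σ (act σ⁻¹ N) = N := by
  rw [act_mul, mul_inv_cancel, act_one]

lemma irr_act (σ : Equiv.Perm α) {N : Finset α × Finset (Finset α)}
    (h : ¬ ∃ M, Step14 N M) : ¬ ∃ M, Step14 (act σ N) M := by
  rintro ⟨M, hM⟩
  refine h ⟨act σ⁻¹ M, ?_⟩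
  have := step_act σ⁻¹ hM
  rwa [act_inv_act] at this

/-- size measure -/
def mu (N : Finset α × Finset (Finset α)) : ℕ := N.1.card + N.2.card

lemma step_mu {N M : Finset α × Finset (Finset α)} (h : Step14 N M) : mu M < mu N := by
  rcases h with ⟨s1, s2, hs1, hs2, hs12, hdom, h1, h2⟩ |
    ⟨c1, c2, hc1, hc2, hc12, hsub, h1, h2⟩
  · have ha : M.1.card < N.1.card := by
      rw [h1]; exact Finset.card_erase_lt_of_mem hs2
    have hb : M.2.card ≤ N.2.card := by
      rw [h2]; exact Finset.card_image_le
    unfold mu; omega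
  · have ha : M.1.card = N.1.card := by rw [h1]
    have hb : M.2.card < N.2.card := by
      rw [h2]; exact Finset.card_erase_lt_of_mem hc2
    unfold mu; omega

lemma exists_core (N : Finset α × Finset (Finset α)) :
    ∃ M, Relation.ReflTransGen Step14 N M ∧ ¬ ∃ K, Step14 M K := by
  by_cases h : ∃ K, Step14 N K
  · obtain ⟨K, hK⟩ := h
    obtain ⟨M, hM, iM⟩ := exists_core K
    exact ⟨M, Relation.ReflTransGen.head hK hM, iM⟩
  · exact ⟨N, Relation.ReflTransGen.refl, h⟩
termination_by mu N
decreasing_by exact step_mu hK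

/-- confluence when both steps are station-deletions -/
lemma conf11 {N A B : Finset α × Finset (Finset α)} {s1 s2 t1 t2 : α}
    (hs1 : s1 ∈ N.1) (hs2 : s2 ∈ N.1) (hs12 : s1 ≠ s2)
    (hdomA : ∀ c ∈ N.2, s2 ∈ c → s1 ∈ c)
    (hA1 : A.1 = N.1.erase s2) (hA2 : A.2 = N.2.image (fun c => c.erase s2))
    (ht1 : t1 ∈ N.1) (ht2 : t2 ∈ N.1) (ht12 : t1 ≠ t2)
    (hdomB : ∀ c ∈ N.2, t2 ∈ c → t1 ∈ c)
    (hB1 : B.1 = N.1.erase t2) (hB2 : B.2 = N.2.image (fun c => c.erase t2)) :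
    (∃ D, Relation.ReflTransGen Step14 A D ∧ Relation.ReflTransGen Step14 B D) ∨
      ∃ σ : Equiv.Perm α, act σ A = B := by
  rcases eq_or_ne s2 t2 with rfl | hst
  · left
    have hAB : A = B := Prod.ext_iff.mpr ⟨hA1.trans hB1.symm, hA2.trans hB2.symm⟩
    exact ⟨A, Relation.ReflTransGen.refl, hAB ▸ Relation.ReflTransGen.refl⟩
  by_cases hcyc : s1 = t2 ∧ t1 = s2
  · right
    obtain ⟨hcs, hct⟩ := hcyc
    have hmut : ∀ c ∈ N.2, (s2 ∈ c ↔ t2 ∈ c) := by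
      intro c hc
      constructor
      · intro h; have := hdomA c hc h; rwa [hcs] at this
      · intro h; have := hdomB c hc h; rwa [hct] at this
    refine ⟨Equiv.swap s2 t2, Prod.ext_iff.mpr ⟨?_, ?_⟩⟩
    · show A.1.image (Equiv.swap s2 t2) = B.1
      rw [hA1, hB1]
      exact swap_erase (iff_of_true hs2 ht2)
    · show A.2.image (fun c => c.image (Equiv.swap s2 t2)) = B.2
      rw [hA2, hB2, Finset.image_image]
      apply Finset.image_congr
      intro c hc
      exact swap_erase (hmut c hc)
  · left
    -- both stations can be removed, in either order
    set dA : α := if t1 = s2 then s1 else t1 with hdA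
    set dB : α := if s1 = t2 then t1 else s1 with hdB
    refine ⟨((N.1.erase s2).erase t2, N.2.image fun c => (c.erase s2).erase t2),
      Relation.ReflTransGen.single ?_, Relation.ReflTransGen.single ?_⟩
    · -- step A → D removing t2
      left
      refine ⟨dA, t2, ?_, ?_, ?_, ?_, ?_, ?_⟩
      · rw [hA1, Finset.mem_erase, hdA]
        split_ifs with h
        · exact ⟨fun hh => hs12 hh, hs1⟩
        · exact ⟨h, ht1⟩
      · rw [hA1, Finset.mem_erase]
        exact ⟨fun hh => hst hh.symm, ht2⟩
      · rw [hdA]; split_ifs with h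
        · intro hh; exact hcyc ⟨hh, h⟩
        · exact ht12
      · intro c' hc' hmem
        rw [hA2] at hc'
        rcases Finset.mem_image.1 hc' with ⟨c, hc, rfl⟩
        have ht2c : t2 ∈ c := Finset.mem_of_mem_erase hmem
        rw [hdA]; split_ifs with h
        · have h1 : t1 ∈ c := hdomB c hc ht2c
          have h2 : s1 ∈ c := hdomA c hc (h ▸ h1)
          exact Finset.mem_erase.2 ⟨hs12, h2⟩
        · exact Finset.mem_erase.2 ⟨h, hdomB c hc ht2c⟩
      · rw [hA1]
      · rw [hA2, Finset.image_image]
        rfl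
    · -- step B → D removing s2
      left
      refine ⟨dB, s2, ?_, ?_, ?_, ?_, ?_, ?_⟩
      · rw [hB1, Finset.mem_erase, hdB]
        split_ifs with h
        · exact ⟨ht12, ht1⟩
        · exact ⟨h, hs1⟩
      · rw [hB1, Finset.mem_erase]
        exact ⟨hst, hs2⟩
      · rw [hdB]; split_ifs with h
        · intro hh; exact hcyc ⟨h, hh⟩
        · exact hs12
      · intro c' hc' hmem
        rw [hB2] at hc'
        rcases Finset.mem_image.1 hc' with ⟨c, hc, rfl⟩
        have hs2c : s2 ∈ c := Finset.mem_of_mem_erase hmem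
        rw [hdB]; split_ifs with h
        · have h1 : s1 ∈ c := hdomA c hc hs2c
          have h2 : t1 ∈ c := hdomB c hc (h ▸ h1)
          exact Finset.mem_erase.2 ⟨ht12, h2⟩
        · exact Finset.mem_erase.2 ⟨h, hdomA c hc hs2c⟩
      · rw [hB1, Finset.erase_right_comm]
      · rw [hB2, Finset.image_image]
        have hfun : ((fun c : Finset α => c.erase s2) ∘ (fun c : Finset α => c.erase t2)) =
            (fun c : Finset α => (c.erase s2).erase t2) := by
          funext c
          exact Finset.erase_right_comm
        rw [hfun]

/-- confluence: station deletion vs connection deletion -/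
lemma conf12 {N A B : Finset α × Finset (Finset α)} {s1 s2 : α} {c1 c2 : Finset α}
    (hs1 : s1 ∈ N.1) (hs2 : s2 ∈ N.1) (hs12 : s1 ≠ s2)
    (hdom : ∀ c ∈ N.2, s2 ∈ c → s1 ∈ c)
    (hA1 : A.1 = N.1.erase s2) (hA2 : A.2 = N.2.image (fun c => c.erase s2))
    (hc1 : c1 ∈ N.2) (hc2 : c2 ∈ N.2) (hc12 : c1 ≠ c2) (hsub : c1 ⊆ c2)
    (hB1 : B.1 = N.1) (hB2 : B.2 = N.2.erase c2) :
    ∃ D, Relation.ReflTransGen Step14 A D ∧ Relation.ReflTransGen Step14 B D := by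
  set I : Finset (Finset α) := (N.2.erase c2).image (fun c => c.erase s2) with hI
  have hsplit : N.2.image (fun c => c.erase s2) = insert (c2.erase s2) I := by
    conv_lhs => rw [← Finset.insert_erase hc2]
    rw [Finset.image_insert]
  have stepB : Step14 B (N.1.erase s2, I) := by
    left
    refine ⟨s1, s2, by rw [hB1]; exact hs1, by rw [hB1]; exact hs2, hs12, ?_,
      by rw [hB1], by rw [hB2]⟩
    intro c hc
    rw [hB2] at hc
    exact hdom c (Finset.mem_of_mem_erase hc)
  by_cases heq : c1.erase s2 = c2.erase s2
  · have hmem : c2.erase s2 ∈ I :=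
      heq ▸ Finset.mem_image_of_mem _ (Finset.mem_erase.2 ⟨hc12, hc1⟩)
    have hAeq : A = (N.1.erase s2, I) := by
      refine Prod.ext_iff.mpr ⟨hA1, ?_⟩
      rw [hA2, hsplit, Finset.insert_eq_of_mem hmem]
    exact ⟨A, Relation.ReflTransGen.refl,
      Relation.ReflTransGen.single (by rw [hAeq]; exact stepB)⟩
  · have he : c2.erase s2 ∈ A.2 := by
      rw [hA2]; exact Finset.mem_image_of_mem _ hc2
    have he1 : c1.erase s2 ∈ A.2 := by
      rw [hA2]; exact Finset.mem_image_of_mem _ hc1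
    have stepA : Step14 A (A.1, A.2.erase (c2.erase s2)) :=
      Or.inr ⟨c1.erase s2, c2.erase s2, he1, he, heq,
        Finset.erase_subset_erase _ hsub, rfl, rfl⟩
    have hA2e : A.2.erase (c2.erase s2) = I.erase (c2.erase s2) := by
      rw [hA2, hsplit, Finset.erase_insert_eq_erase]
    by_cases hmem : c2.erase s2 ∈ I
    · have he1I : c1.erase s2 ∈ I :=
        Finset.mem_image_of_mem _ (Finset.mem_erase.2 ⟨hc12, hc1⟩)
      have stepB2 : Step14 (N.1.erase s2, I) (A.1, A.2.erase (c2.erase s2)) := by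
        right
        exact ⟨c1.erase s2, c2.erase s2, he1I, hmem, heq,
          Finset.erase_subset_erase _ hsub, hA1, hA2e⟩
      exact ⟨(A.1, A.2.erase (c2.erase s2)), Relation.ReflTransGen.single stepA,
        (Relation.ReflTransGen.single stepB).tail stepB2⟩
    · have hpair : (A.1, A.2.erase (c2.erase s2)) = (N.1.erase s2, I) := by
        rw [hA1, hA2e, Finset.erase_eq_of_notMem hmem]
      exact ⟨(A.1, A.2.erase (c2.erase s2)), Relation.ReflTransGen.single stepA,
        Relation.ReflTransGen.single (by rw [hpair]; exact stepB)⟩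

/-- confluence when both steps are connection-deletions -/
lemma conf22 {N A B : Finset α × Finset (Finset α)} {c1 c2 d1 d2 : Finset α}
    (hc1 : c1 ∈ N.2) (hc2 : c2 ∈ N.2) (hc12 : c1 ≠ c2) (hcs : c1 ⊆ c2)
    (hA1 : A.1 = N.1) (hA2 : A.2 = N.2.erase c2)
    (hd1 : d1 ∈ N.2) (hd2 : d2 ∈ N.2) (hd12 : d1 ≠ d2) (hds : d1 ⊆ d2)
    (hB1 : B.1 = N.1) (hB2 : B.2 = N.2.erase d2) :
    ∃ D, Relation.ReflTransGen Step14 A D ∧ Relation.ReflTransGen Step14 B D := by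
  rcases eq_or_ne c2 d2 with rfl | hcd
  · have hAB : A = B := Prod.ext_iff.mpr ⟨hA1.trans hB1.symm, hA2.trans hB2.symm⟩
    exact ⟨A, Relation.ReflTransGen.refl, hAB ▸ Relation.ReflTransGen.refl⟩
  refine ⟨(N.1, (N.2.erase c2).erase d2),
    Relation.ReflTransGen.single ?_, Relation.ReflTransGen.single ?_⟩
  · right
    refine ⟨if d1 = c2 then c1 else d1, d2, ?_, ?_, ?_, ?_, by rw [hA1], by rw [hA2]⟩
    · rw [hA2]; split_ifs with h
      · exact Finset.mem_erase.2 ⟨hc12, hc1⟩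
      · exact Finset.mem_erase.2 ⟨h, hd1⟩
    · rw [hA2]; exact Finset.mem_erase.2 ⟨fun hh => hcd hh.symm, hd2⟩
    · split_ifs with h
      · intro hh
        exact hd12 (Finset.Subset.antisymm hds (hh ▸ (h ▸ hcs)))
      · exact hd12
    · split_ifs with h
      · exact hcs.trans (h ▸ hds)
      · exact hds
  · right
    refine ⟨if c1 = d2 then d1 else c1, c2, ?_, ?_, ?_, ?_, by rw [hB1],
      by rw [hB2, Finset.erase_right_comm]⟩
    · rw [hB2]; split_ifs with h
      · exact Finset.mem_erase.2 ⟨hd12, hd1⟩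
      · exact Finset.mem_erase.2 ⟨h, hc1⟩
    · rw [hB2]; exact Finset.mem_erase.2 ⟨hcd, hc2⟩
    · split_ifs with h
      · intro hh
        exact hc12 (Finset.Subset.antisymm hcs (hh ▸ (h ▸ hds)))
      · exact hc12
    · split_ifs with h
      · exact hds.trans (h ▸ hcs)
      · exact hcs

lemma local_conf {N A B : Finset α × Finset (Finset α)}
    (hA : Step14 N A) (hB : Step14 N B) :
    (∃ D, Relation.ReflTransGen Step14 A D ∧ Relation.ReflTransGen Step14 B D) ∨
      ∃ σ : Equiv.Perm α, act σ A = B := by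
  rcases hA with ⟨s1, s2, hs1, hs2, hs12, hdomA, hA1, hA2⟩ |
    ⟨c1, c2, hc1, hc2, hc12, hcs, hA1, hA2⟩
  · rcases hB with ⟨t1, t2, ht1, ht2, ht12, hdomB, hB1, hB2⟩ |
      ⟨d1, d2, hd1, hd2, hd12, hds, hB1, hB2⟩
    · exact conf11 hs1 hs2 hs12 hdomA hA1 hA2 ht1 ht2 ht12 hdomB hB1 hB2
    · exact Or.inl (conf12 hs1 hs2 hs12 hdomA hA1 hA2 hd1 hd2 hd12 hds hB1 hB2)
  · rcases hB with ⟨t1, t2, ht1, ht2, ht12, hdomB, hB1, hB2⟩ |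
      ⟨d1, d2, hd1, hd2, hd12, hds, hB1, hB2⟩
    · obtain ⟨D, h1, h2⟩ :=
        conf12 ht1 ht2 ht12 hdomB hB1 hB2 hc1 hc2 hc12 hcs hA1 hA2
      exact Or.inl ⟨D, h2, h1⟩
    · exact Or.inl (conf22 hc1 hc2 hc12 hcs hA1 hA2 hd1 hd2 hd12 hds hB1 hB2)

lemma core_unique (N N1 N2 : Finset α × Finset (Finset α))
    (h1 : Relation.ReflTransGen Step14 N N1) (i1 : ¬ ∃ M, Step14 N1 M)
    (h2 : Relation.ReflTransGen Step14 N N2) (i2 : ¬ ∃ M, Step14 N2 M) :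
    ∃ σ : Equiv.Perm α, act σ N1 = N2 := by
  rcases h1.cases_head with rfl | ⟨A, hNA, hA1⟩
  · rcases h2.cases_head with rfl | ⟨B, hNB, _⟩
    · exact ⟨1, act_one _⟩
    · exact absurd ⟨B, hNB⟩ i1
  rcases h2.cases_head with rfl | ⟨B, hNB, hB2⟩
  · exact absurd ⟨A, hNA⟩ i2
  rcases local_conf hNA hNB with ⟨D, hAD, hBD⟩ | ⟨σ, hσ⟩
  · obtain ⟨E, hDE, iE⟩ := exists_core D
    obtain ⟨σ, hσ⟩ := core_unique A N1 E hA1 i1 (hAD.trans hDE) iE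
    obtain ⟨τ, hτ⟩ := core_unique B N2 E hB2 i2 (hBD.trans hDE) iE
    refine ⟨τ⁻¹ * σ, ?_⟩
    rw [← act_mul, hσ, ← hτ, act_inv_act]
  · have hRT : Relation.ReflTransGen Step14 A (act σ⁻¹ N2) := by
      have := rtg_act σ⁻¹ hB2
      rwa [← hσ, act_inv_act] at this
    have iN2' : ¬ ∃ M, Step14 (act σ⁻¹ N2) M := irr_act σ⁻¹ i2
    obtain ⟨ρ, hρ⟩ := core_unique A N1 (act σ⁻¹ N2) hA1 i1 hRT iN2'
    refine ⟨σ * ρ, ?_⟩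
    rw [← act_mul, hρ, act_act_inv]
termination_by mu N
decreasing_by
  exacts [step_mu hNA, step_mu hNB, step_mu hNA]

end Stmt14Aux

/-- Any two cores obtained from the same instance by maximal sequences of
reduction-rule applications have the same number of stations: the core size is
independent of the order of rule applications. -/
theorem stmt14 (N N1 N2 : Finset α × Finset (Finset α))
    (hne : ∀ c ∈ N.2, c.Nonempty) (hsub : ∀ c ∈ N.2, c ⊆ N.1)
    (h1 : Relation.ReflTransGen Step14 N N1) (h1irr : ¬ ∃ M, Step14 N1 M)
    (h2 : Relation.ReflTransGen Step14 N N2) (h2irr : ¬ ∃ M, Step14 N2 M) :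
    N1.1.card = N2.1.card := by
  obtain ⟨σ, hσ⟩ := Stmt14Aux.core_unique N N1 N2 h1 h1irr h2 h2irr
  rw [← hσ]
  exact (Finset.card_image_of_injective _ σ.injective).symm
end
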